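/- Let A = M_n(F) carry the elementary grading induced by an n-tuple (h_1,…,h_n) of pairwise distinct elements of a group G, and let H ≤ S_n be the group of permutations whose associated automorphisms Λ_σ are graded. (1) If there exist a non-zero diagonal matrix P and a polynomial f in F⟨X_G⟩ that is not a graded identity for A such that the result of every f-admissible substitution is a scalar multiple of P, then there exists a group homomorphism λ: H → F^× such that P is a linear combination of the matrices P(i_1),…,P(i_d), where P(i) = Σ_{α∈H} λ(α)E_{α(i),α(i)} and i_1,…,i_d is a system of representatives of the H-orbits on {1,…,n}. (2) Conversely, given a homomorphism λ: H → F^× and a non-zero diagonal matrix P = diag(p_1,…,p_n) that is a linear combination of P(i_1),…,P(i_d), the multilinear polynomial f = Σ_i p_i · x_{σ^i(1),g_{σ^i(1)}}⋯x_{σ^i(n),g_{σ^i(n)}}, where σ is the n-cycle (1 2 … n), g_i = h_i^{-1}h_{i+1} for i < n and g_n = h_n^{-1}h_1, is not a graded identity for A and the result of every f-admissible substitution is a scalar multiple of P. -/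

import Mathlib

section GradedDefs

variable {F : Type*} [Field F] {G : Type*} [Group G] {A : Type*} [Ring A] [Algebra F A]

/-- An internal algebra grading of `A` by the group `G`: the components are independent,
span `A`, and multiply according to the group operation. -/
structure IsAlgGrading [DecidableEq G] (𝒜 : G → Submodule F A) : Prop where
  internal : DirectSum.IsInternal 𝒜
  mul_mem : ∀ {g h : G} {x y : A}, x ∈ 𝒜 g → y ∈ 𝒜 h → x * y ∈ 𝒜 (g * h)

/-- An admissible (graded) substitution: the variable `x_{i,g}` is replaced by an element
of the homogeneous component of degree `g`. -/
def GradedSubst (𝒜 : G → Submodule F A) (a : ℕ × G → A) : Prop := ∀ p : ℕ × G, a p ∈ 𝒜 p.2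

/-- `f` is a graded polynomial identity. -/
def IsGradedIdentity (𝒜 : G → Submodule F A) (f : FreeAlgebra F (ℕ × G)) : Prop :=
  ∀ a : ℕ × G → A, GradedSubst 𝒜 a → FreeAlgebra.lift F a f = 0

/-- `f` is a graded central polynomial. -/
def IsGradedCentral (𝒜 : G → Submodule F A) (f : FreeAlgebra F (ℕ × G)) : Prop :=
  ¬ IsGradedIdentity 𝒜 f ∧
    ∀ a : ℕ × G → A, GradedSubst 𝒜 a → FreeAlgebra.lift F a f ∈ Set.center A

/-- `f` only uses (graded) variables from the set `S`. -/
def UsesVars (S : Set (ℕ × G)) (f : FreeAlgebra F (ℕ × G)) : Prop :=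
  f ∈ Algebra.adjoin F (FreeAlgebra.ι F '' S)

/-- The primeness property for graded central polynomials: if a product of two polynomials
in disjoint sets of variables is graded central, then both factors are graded central. -/
def HasGradedPrimeness (𝒜 : G → Submodule F A) : Prop :=
  ∀ (S T : Set (ℕ × G)) (f g : FreeAlgebra F (ℕ × G)),
    Disjoint S T → UsesVars S f → UsesVars T g →
    IsGradedCentral 𝒜 (f * g) →
    IsGradedCentral 𝒜 f ∧ IsGradedCentral 𝒜 g

end GradedDefs

section Elementary

variable (F : Type*) [Field F] {G : Type*} [Group G] {n : ℕ}

/-- The homogeneous component of degree `x` of the elementary grading of `Mₙ(F)`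
induced by the tuple `v`: it is spanned by the matrix units `E i j` with
`(v i)⁻¹ * v j = x`. -/
def elemComp (v : Fin n → G) (x : G) : Submodule F (Matrix (Fin n) (Fin n) F) where
  carrier := {M | ∀ i j, (v i)⁻¹ * v j ≠ x → M i j = 0}
  add_mem' := by
    intro M N hM hN i j h
    simp [Matrix.add_apply, hM i j h, hN i j h]
  zero_mem' := by intro i j _; simp
  smul_mem' := by
    intro c M hM i j h
    simp [Matrix.smul_apply, hM i j h]

/-- The subgroup of permutations `σ` of `{1,…,n}` for which the automorphism `Λ_σ`
(which sends `E i j` to `E (σ i) (σ j)`) is a graded automorphism. -/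
def GradedPerms (v : Fin n → G) : Subgroup (Equiv.Perm (Fin n)) where
  carrier := {σ | ∀ i j, (v (σ i))⁻¹ * v (σ j) = (v i)⁻¹ * v j}
  one_mem' := by intro i j; simp
  mul_mem' := by
    intro σ τ hσ hτ i j
    simpa [Equiv.Perm.mul_apply] using (hσ (τ i) (τ j)).trans (hτ i j)
  inv_mem' := by
    intro σ hσ i j
    simpa using (hσ (σ⁻¹ i) (σ⁻¹ j)).symm

/-- The automorphism `Λ_σ` of the matrix algebra, determined by
`Λ_σ (E i j) = E (σ i) (σ j)`. -/
def permConj (σ : Equiv.Perm (Fin n)) (M : Matrix (Fin n) (Fin n) F) :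
    Matrix (Fin n) (Fin n) F :=
  M.submatrix ⇑σ.symm ⇑σ.symm

end Elementary

section Pmat

variable (F : Type*) [Field F] {G : Type*} [Group G] {n : ℕ}

noncomputable instance (v : Fin n → G) : Fintype ↥(GradedPerms v) := Fintype.ofFinite _

/-- The diagonal matrix `P(i) = ∑_{α ∈ H} λ(α) E (α i) (α i)`. -/
noncomputable def Pmat (v : Fin n → G) (lam : ↥(GradedPerms v) →* Fˣ) (i : Fin n) :
    Matrix (Fin n) (Fin n) F :=
  ∑ α : ↥(GradedPerms v),
    ((lam α : Fˣ) : F) •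
      Matrix.single ((α : Equiv.Perm (Fin n)) i) ((α : Equiv.Perm (Fin n)) i) 1

end Pmat

section Cyclic

variable (F : Type*) [Field F] {G : Type*} [Group G] {n : ℕ} [NeZero n]

/-- The multilinear polynomial `f = ∑ᵢ pᵢ · x_{σ^i(1)} ⋯ x_{σ^i(n)}` associated to the
`n`-cycle `σ = (1 2 … n)`, where the variable `x_t` has degree `v t⁻¹ * v (t+1)`
(indices mod `n`). -/
noncomputable def cyclicPoly (v : Fin n → G) (p : Fin n → F) : FreeAlgebra F (ℕ × G) :=
  ∑ i : Fin n, p i •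
    (List.ofFn fun t : Fin n =>
      FreeAlgebra.ι F (((i + t : Fin n) : ℕ), (v (i + t))⁻¹ * v (i + t + 1))).prod

end Cyclic


section Aux

variable {F : Type*} [Field F] {G : Type*} [Group G] {n : ℕ}

open Fin.NatCast

lemma mem_elemComp {v : Fin n → G} {g : G} {M : Matrix (Fin n) (Fin n) F} :
    M ∈ elemComp F v g ↔ ∀ i j, (v i)⁻¹ * v j ≠ g → M i j = 0 := Iff.rfl

lemma mem_gradedPerms {v : Fin n → G} {σ : Equiv.Perm (Fin n)} :
    σ ∈ GradedPerms v ↔ ∀ i j, (v (σ i))⁻¹ * v (σ j) = (v i)⁻¹ * v j := Iff.rfl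

lemma gp_translate {v : Fin n → G} {σ : Equiv.Perm (Fin n)} (hσ : σ ∈ GradedPerms v)
    (i j : Fin n) : v (σ j) = v (σ i) * (v i)⁻¹ * v j := by
  have h := mem_gradedPerms.1 hσ i j
  have h2 : v (σ i) * ((v (σ i))⁻¹ * v (σ j)) = v (σ i) * ((v i)⁻¹ * v j) := by rw [h]
  simpa [mul_assoc] using h2

lemma gp_free {v : Fin n → G} (hv : Function.Injective v) {σ : Equiv.Perm (Fin n)}
    (hσ : σ ∈ GradedPerms v) {i : Fin n} (h : σ i = i) : σ = 1 := by
  ext j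
  have h2 := gp_translate hσ i j
  rw [h] at h2
  simp only [mul_inv_cancel_right, Equiv.Perm.coe_one, id_eq] at *
  have : v (σ j) = v j := by simpa using h2
  exact congrArg Fin.val (hv this)

lemma elemComp_mul_mem {v : Fin n → G} {g h : G} {x y : Matrix (Fin n) (Fin n) F}
    (hx : x ∈ elemComp F v g) (hy : y ∈ elemComp F v h) :
    x * y ∈ elemComp F v (g * h) := by
  refine mem_elemComp.2 fun i j hne => ?_
  rw [Matrix.mul_apply]
  refine Finset.sum_eq_zero fun m _ => ?_
  by_cases h1 : (v i)⁻¹ * v m = g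
  · by_cases h2 : (v m)⁻¹ * v j = h
    · exact absurd (by rw [← h1, ← h2]; group) hne
    · rw [mem_elemComp.1 hy m j h2, mul_zero]
  · rw [mem_elemComp.1 hx i m h1, zero_mul]


lemma ofFn_shift (c : ℕ → Matrix (Fin n) (Fin n) F) (m : ℕ) :
    (List.ofFn fun t : Fin (m+1) => c ↑t) =
      c 0 :: List.ofFn fun t : Fin m => (fun s => c (s+1)) ↑t := by
  rw [List.ofFn_succ]
  simp [Fin.val_succ]

lemma prod_mem_elemComp (v : Fin n → G) :
    ∀ (m : ℕ) (c : ℕ → Matrix (Fin n) (Fin n) F) (u : ℕ → Fin n),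
    (∀ t, c t ∈ elemComp F v ((v (u t))⁻¹ * v (u (t+1)))) →
    (List.ofFn fun t : Fin m => c ↑t).prod ∈ elemComp F v ((v (u 0))⁻¹ * v (u m))
  | 0, c, u, hc => by
      refine mem_elemComp.2 fun i j hne => ?_
      simp only [List.ofFn_zero, List.prod_nil]
      by_cases h : i = j
      · subst h; simp at hne
      · exact Matrix.one_apply_ne h
  | (m+1), c, u, hc => by
      have ih := prod_mem_elemComp v m (fun s => c (s+1)) (fun s => u (s+1))
        (fun t => hc (t+1))
      rw [ofFn_shift, List.prod_cons]
      have hdeg : (v (u 0))⁻¹ * v (u (m+1)) =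
          ((v (u 0))⁻¹ * v (u 1)) * ((v (u 1))⁻¹ * v (u (m+1))) := by group
      rw [hdeg]
      exact elemComp_mul_mem (hc 0) ih

lemma prod_entry_eq (v : Fin n → G) (hv : Function.Injective v)
    {σ : Equiv.Perm (Fin n)} (hσ : σ ∈ GradedPerms v) :
    ∀ (m : ℕ) (c : ℕ → Matrix (Fin n) (Fin n) F) (u : ℕ → Fin n),
    (∀ t, c t ∈ elemComp F v ((v (u t))⁻¹ * v (u (t+1)))) →
    (List.ofFn fun t : Fin m => c ↑t).prod (σ (u 0)) (σ (u m)) =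
      ∏ t ∈ Finset.range m, c t (σ (u t)) (σ (u (t+1)))
  | 0, c, u, hc => by
      simp [Matrix.one_apply_eq]
  | (m+1), c, u, hc => by
      have ih := prod_entry_eq v hv hσ m (fun s => c (s+1)) (fun s => u (s+1))
        (fun t => hc (t+1))
      rw [ofFn_shift, List.prod_cons, Matrix.mul_apply]
      rw [Finset.sum_eq_single (σ (u 1))]
      · rw [ih, Finset.prod_range_succ', mul_comm]
      · intro l _ hl
        have h0 : c 0 (σ (u 0)) l = 0 := by
          refine mem_elemComp.1 (hc 0) _ _ fun heq => ?_
          apply hl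
          have hvl : v l = v (σ (u 0)) * ((v (σ (u 0)))⁻¹ * v l) := by group
          rw [heq, ← mul_assoc, ← gp_translate hσ (u 0) (u 1)] at hvl
          exact hv hvl
        rw [h0, zero_mul]
      · intro h; exact absurd (Finset.mem_univ _) h


lemma prod_entry_path (v : Fin n → G) :
    ∀ (m : ℕ) (c : ℕ → Matrix (Fin n) (Fin n) F) (u : ℕ → Fin n),
    (∀ t, c t ∈ elemComp F v ((v (u t))⁻¹ * v (u (t+1)))) →
    ∀ k l : Fin n, (List.ofFn fun t : Fin m => c ↑t).prod k l ≠ 0 →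
    ∀ t, t ≤ m → ∃ r : Fin n, v r = v k * (v (u 0))⁻¹ * v (u t)
  | 0, c, u, hc, k, l, hne, t, ht => by
      interval_cases t
      exact ⟨k, by group⟩
  | (m+1), c, u, hc, k, l, hne, t, ht => by
      rw [ofFn_shift, List.prod_cons, Matrix.mul_apply] at hne
      obtain ⟨l', -, hl'⟩ := Finset.exists_ne_zero_of_sum_ne_zero hne
      have h1 : c 0 k l' ≠ 0 := fun h => hl' (by rw [h, zero_mul])
      have h2 : (List.ofFn fun s : Fin m => (fun s => c (s+1)) ↑s).prod l' l ≠ 0 :=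
        fun h => hl' (by rw [h, mul_zero])
      have hkl' : (v k)⁻¹ * v l' = (v (u 0))⁻¹ * v (u 1) := by
        by_contra hcon
        exact h1 (mem_elemComp.1 (hc 0) _ _ hcon)
      have hvl' : v l' = v k * ((v (u 0))⁻¹ * v (u 1)) := by
        rw [← hkl']; group
      rcases Nat.eq_zero_or_pos t with rfl | htpos
      · exact ⟨k, by group⟩
      · obtain ⟨s, rfl⟩ := Nat.exists_eq_add_of_lt htpos
        rw [zero_add] at *
        have ih := prod_entry_path v m (fun s => c (s+1)) (fun s => u (s+1))
          (fun t => hc (t+1)) l' l h2 s (by omega)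
        obtain ⟨r, hr⟩ := ih
        refine ⟨r, ?_⟩
        rw [hr, hvl']
        group

lemma exists_perm_of_entry_ne_zero [NeZero n] (v : Fin n → G) (hv : Function.Injective v)
    (c : ℕ → Matrix (Fin n) (Fin n) F) (u : ℕ → Fin n)
    (hc : ∀ t, c t ∈ elemComp F v ((v (u t))⁻¹ * v (u (t+1))))
    (hu : ∀ j : Fin n, ∃ t, t ≤ n ∧ u t = j)
    (k l : Fin n) (hne : (List.ofFn fun t : Fin n => c ↑t).prod k l ≠ 0) :
    ∃ σ : Equiv.Perm (Fin n), σ ∈ GradedPerms v ∧ σ (u 0) = k := by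
  have hpath : ∀ j : Fin n, ∃ r : Fin n, v r = v k * (v (u 0))⁻¹ * v j := by
    intro j
    obtain ⟨t, ht, rfl⟩ := hu j
    exact prod_entry_path v n c u hc k l hne t ht
  choose f hf using hpath
  have hinj : Function.Injective f := by
    intro a b hab
    have : v a = v b := by
      have := congrArg v hab
      rw [hf a, hf b] at this
      exact mul_left_cancel this
    exact hv this
  have hbij := Finite.injective_iff_bijective.1 hinj
  refine ⟨Equiv.ofBijective f hbij, ?_, ?_⟩
  · refine mem_gradedPerms.2 fun i j => ?_
    show (v (f i))⁻¹ * v (f j) = _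
    rw [hf i, hf j]; group
  · show f (u 0) = k
    apply hv
    rw [hf (u 0)]; group

lemma ucast [NeZero n] (i : Fin n) (t : ℕ) : i + (↑(t+1) : Fin n) = (i + ↑t) + 1 := by
  push_cast
  open Fin.CommRing in ring

lemma u_zero [NeZero n] (i : Fin n) : i + ((0:ℕ) : Fin n) = i := by simp

lemma u_n [NeZero n] (i : Fin n) : i + ((n:ℕ) : Fin n) = i := by
  simp [Fin.natCast_self]

lemma u_surj [NeZero n] (i : Fin n) (j : Fin n) : ∃ t, t ≤ n ∧ i + (↑t : Fin n) = j := by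
  refine ⟨((j - i : Fin n) : ℕ), Nat.le_of_lt (Fin.is_lt _), ?_⟩
  rw [Fin.cast_val_eq_self]
  rw [add_comm, sub_add_cancel]

lemma cyclic_value_eq [NeZero n] (v : Fin n → G) (hv : Function.Injective v)
    (p : Fin n → F) (lam : ↥(GradedPerms v) →* Fˣ)
    (hp : ∀ (σ : ↥(GradedPerms v)) (j : Fin n),
      p ((σ : Equiv.Perm (Fin n)) j) = ((lam σ : Fˣ) : F) * p j)
    (b : Fin n → Matrix (Fin n) (Fin n) F)
    (hb : ∀ s, b s ∈ elemComp F v ((v s)⁻¹ * v (s + 1))) :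
    ∑ i : Fin n, p i • (List.ofFn fun t : Fin n => b (i + t)).prod =
      (∑ σ : ↥(GradedPerms v), (((lam σ)⁻¹ : Fˣ) : F) *
        ∏ s : Fin n, b s ((σ : Equiv.Perm (Fin n)) s) ((σ : Equiv.Perm (Fin n)) (s + 1)))
        • Matrix.diagonal p := by
  have hcmem : ∀ i : Fin n, ∀ t : ℕ,
      (fun s : ℕ => b (i + ↑s)) t ∈ elemComp F v
        ((v ((fun s : ℕ => i + (↑s : Fin n)) t))⁻¹ *
          v ((fun s : ℕ => i + (↑s : Fin n)) (t+1))) := by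
    intro i t
    simp only
    rw [ucast]
    exact hb (i + ↑t)
  have hofFn : ∀ i : Fin n, (List.ofFn fun t : Fin n => b (i + t)) =
      List.ofFn fun t : Fin n => (fun s : ℕ => b (i + ↑s)) ↑t := by
    intro i
    congr 1
    funext t
    simp [Fin.cast_val_eq_self]
  ext k l
  by_cases hkl : k = l
  · subst hkl
    simp only [Matrix.sum_apply, Matrix.smul_apply, smul_eq_mul, Matrix.diagonal_apply_eq]
    set Φ : ↥(GradedPerms v) → Fin n :=
      fun σ => ((σ : Equiv.Perm (Fin n)))⁻¹ k with hΦ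
    have hΦinj : ∀ x ∈ Finset.univ, ∀ y ∈ Finset.univ, Φ x = Φ y →
        (x : ↥(GradedPerms v)) = y := by
      intro x _ y _ hxy
      simp only [hΦ] at hxy
      have h1 : ((↑(x⁻¹ * y) : Equiv.Perm (Fin n)))
          (((y : Equiv.Perm (Fin n)))⁻¹ k) = ((y : Equiv.Perm (Fin n)))⁻¹ k := by
        simp only [Subgroup.coe_mul, InvMemClass.coe_inv, Equiv.Perm.mul_apply]
        rw [show ((y : Equiv.Perm (Fin n))) (((y : Equiv.Perm (Fin n)))⁻¹ k) = k from
          Equiv.apply_symm_apply _ _]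
        exact hxy
      have h2 := gp_free hv (x⁻¹ * y).2 h1
      have h3 : (x⁻¹ * y : ↥(GradedPerms v)) = 1 := by
        exact Subtype.ext h2
      exact inv_mul_eq_one.1 h3
    have hvanish : ∀ i ∈ Finset.univ, i ∉ Finset.univ.image Φ →
        p i * (List.ofFn fun t : Fin n => b (i + t)).prod k k = 0 := by
      intro i _ hi
      rcases eq_or_ne ((List.ofFn fun t : Fin n => b (i + t)).prod k k) 0 with h | h
      · rw [h, mul_zero]
      exfalso
      apply hi
      rw [hofFn i] at h
      obtain ⟨σ, hσmem, hσ0⟩ := exists_perm_of_entry_ne_zero v hv _ _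
        (hcmem i) (u_surj i) k k h
      rw [u_zero] at hσ0
      refine Finset.mem_image.2 ⟨⟨σ, hσmem⟩, Finset.mem_univ _, ?_⟩
      simp only [hΦ]
      rw [← hσ0]
      simp
    rw [← Finset.sum_subset (Finset.subset_univ (Finset.univ.image Φ)) hvanish,
      Finset.sum_image hΦinj, Finset.sum_mul]
    refine Finset.sum_congr rfl fun σ _ => ?_
    have hDk : (List.ofFn fun t : Fin n => b (Φ σ + t)).prod k k =
        ∏ s : Fin n, b s ((σ : Equiv.Perm (Fin n)) s) ((σ : Equiv.Perm (Fin n)) (s + 1)) := by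
      set i := Φ σ with hi
      have H := prod_entry_eq v hv σ.2 n (fun s : ℕ => b (i + ↑s))
        (fun s : ℕ => i + (↑s : Fin n)) (hcmem i)
      beta_reduce at H
      rw [u_zero, u_n] at H
      have hσi : (σ : Equiv.Perm (Fin n)) i = k := by
        rw [hi, hΦ]
        exact Equiv.apply_symm_apply _ _
      rw [hσi] at H
      rw [hofFn i, H]
      calc ∏ t ∈ Finset.range n, b (i + ↑t) ((σ : Equiv.Perm (Fin n)) (i + ↑t))
              ((σ : Equiv.Perm (Fin n)) (i + ↑(t+1)))
          = ∏ t : Fin n, b (i + t) ((σ : Equiv.Perm (Fin n)) (i + t))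
              ((σ : Equiv.Perm (Fin n)) ((i + t) + 1)) := by
            rw [← Fin.prod_univ_eq_prod_range
              (fun t : ℕ => b (i + ↑t) ((σ : Equiv.Perm (Fin n)) (i + ↑t))
                ((σ : Equiv.Perm (Fin n)) (i + ↑(t+1)))) n]
            refine Finset.prod_congr rfl fun t _ => ?_
            rw [ucast, Fin.cast_val_eq_self]
        _ = ∏ s : Fin n, b s ((σ : Equiv.Perm (Fin n)) s)
              ((σ : Equiv.Perm (Fin n)) (s + 1)) := by
            exact Equiv.prod_comp (Equiv.addLeft i)
              (fun s => b s ((σ : Equiv.Perm (Fin n)) s) ((σ : Equiv.Perm (Fin n)) (s + 1)))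
    have hpk : p k = ((lam σ : Fˣ) : F) * p (Φ σ) := by
      have h5 := hp σ (Φ σ)
      simp only [hΦ] at h5 ⊢
      rw [Equiv.Perm.inv_def, Equiv.apply_symm_apply] at h5
      exact h5
    rw [hDk, hpk, Units.val_inv_eq_inv_val]
    have hne : ((lam σ : Fˣ) : F) ≠ 0 := Units.ne_zero _
    field_simp
  · simp only [Matrix.sum_apply, Matrix.smul_apply, smul_eq_mul,
      Matrix.diagonal_apply_ne _ hkl, mul_zero]
    refine Finset.sum_eq_zero fun i _ => ?_
    have hmem := prod_mem_elemComp v n (fun s : ℕ => b (i + ↑s))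
      (fun s : ℕ => i + (↑s : Fin n)) (hcmem i)
    rw [← hofFn i] at hmem
    have hz : (List.ofFn fun t : Fin n => b (i + t)).prod k l = 0 := by
      refine mem_elemComp.1 hmem k l fun heq => ?_
      beta_reduce at heq
      rw [u_zero, u_n] at heq
      simp only [inv_mul_cancel] at heq
      have h7 : v l = v k := by
        have h6 : v k * ((v k)⁻¹ * v l) = v k * 1 := by rw [heq]
        simpa [mul_assoc] using h6
      exact hkl ((hv h7).symm)
    rw [hz, mul_zero]

lemma lift_cyclicPoly [NeZero n] (v : Fin n → G) (p : Fin n → F)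
    (a : ℕ × G → Matrix (Fin n) (Fin n) F) :
    FreeAlgebra.lift F a (cyclicPoly F v p) =
      ∑ i : Fin n, p i •
        (List.ofFn fun t : Fin n =>
          a (((i + t : Fin n) : ℕ), (v (i + t))⁻¹ * v (i + t + 1))).prod := by
  rw [cyclicPoly, map_sum]
  refine Finset.sum_congr rfl fun i _ => ?_
  rw [map_smul, map_list_prod, List.map_ofFn]
  have hfun : (⇑(FreeAlgebra.lift F a) ∘ fun t : Fin n =>
      FreeAlgebra.ι F (((i + t : Fin n) : ℕ), (v (i + t))⁻¹ * v (i + t + 1))) =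
      fun t : Fin n => a (((i + t : Fin n) : ℕ), (v (i + t))⁻¹ * v (i + t + 1)) := by
    funext t
    simp [FreeAlgebra.lift_ι_apply]
  rw [hfun]

lemma Pmat_apply_diag (v : Fin n → G) (lam : ↥(GradedPerms v) →* Fˣ) (i m : Fin n) :
    Pmat F v lam i m m = ∑ α : ↥(GradedPerms v),
      (if (α : Equiv.Perm (Fin n)) i = m then ((lam α : Fˣ) : F) else 0) := by
  rw [Pmat, Matrix.sum_apply]
  refine Finset.sum_congr rfl fun α _ => ?_
  rw [Matrix.smul_apply]
  by_cases h : (α : Equiv.Perm (Fin n)) i = m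
  · simp [h, Matrix.single]
  · simp [h, Matrix.single]

lemma Pmat_apply_off (v : Fin n → G) (lam : ↥(GradedPerms v) →* Fˣ) (i : Fin n)
    {k l : Fin n} (hkl : k ≠ l) : Pmat F v lam i k l = 0 := by
  rw [Pmat, Matrix.sum_apply]
  refine Finset.sum_eq_zero fun α _ => ?_
  rw [Matrix.smul_apply]
  have : Matrix.single ((α : Equiv.Perm (Fin n)) i)
      ((α : Equiv.Perm (Fin n)) i) (1:F) k l = 0 := by
    rcases eq_or_ne ((α : Equiv.Perm (Fin n)) i) k with h | h
    · rw [Matrix.single_apply_of_ne]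
      rintro ⟨h1, h2⟩
      exact hkl (h1 ▸ h2 ▸ rfl)
    · rw [Matrix.single_apply_of_ne]
      rintro ⟨h1, h2⟩
      exact h h1
  rw [this, smul_zero]

lemma hp_of_combo [NeZero n] (v : Fin n → G) {d : ℕ} (reps : Fin d → Fin n)
    (lam : ↥(GradedPerms v) →* Fˣ) (p : Fin n → F) (c : Fin d → F)
    (hc : Matrix.diagonal p = ∑ t : Fin d, c t • Pmat F v lam (reps t))
    (σ : ↥(GradedPerms v)) (j : Fin n) :
    p ((σ : Equiv.Perm (Fin n)) j) = ((lam σ : Fˣ) : F) * p j := by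
  have hentry : ∀ m : Fin n, p m = ∑ t : Fin d, c t *
      ∑ α : ↥(GradedPerms v), (if (α : Equiv.Perm (Fin n)) (reps t) = m
        then ((lam α : Fˣ) : F) else 0) := by
    intro m
    have h := congrArg (fun M : Matrix (Fin n) (Fin n) F => M m m) hc
    simp only [Matrix.diagonal_apply_eq, Matrix.sum_apply, Matrix.smul_apply,
      smul_eq_mul] at h
    rw [h]
    exact Finset.sum_congr rfl fun t _ => by rw [Pmat_apply_diag]
  rw [hentry ((σ : Equiv.Perm (Fin n)) j), hentry j, Finset.mul_sum]
  refine Finset.sum_congr rfl fun t _ => ?_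
  have hinner : (∑ α : ↥(GradedPerms v),
        (if (α : Equiv.Perm (Fin n)) (reps t) = (σ : Equiv.Perm (Fin n)) j
          then ((lam α : Fˣ) : F) else 0))
      = ((lam σ : Fˣ) : F) * ∑ β : ↥(GradedPerms v),
        (if (β : Equiv.Perm (Fin n)) (reps t) = j then ((lam β : Fˣ) : F) else 0) := by
    rw [Finset.mul_sum]
    rw [← Equiv.sum_comp (Equiv.mulLeft σ) (fun α : ↥(GradedPerms v) =>
      (if (α : Equiv.Perm (Fin n)) (reps t) = (σ : Equiv.Perm (Fin n)) j
        then ((lam α : Fˣ) : F) else 0))]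
    refine Finset.sum_congr rfl fun β _ => ?_
    simp only [Equiv.coe_mulLeft, Subgroup.coe_mul, Equiv.Perm.mul_apply, map_mul,
      Units.val_mul]
    by_cases hb : (β : Equiv.Perm (Fin n)) (reps t) = j
    · rw [if_pos (by rw [hb]), if_pos hb]
    · rw [if_neg (fun hcon => hb ((Equiv.injective _) hcon)), if_neg hb, mul_zero]
  rw [hinner]
  ring

lemma stdBasis_mem (v : Fin n → G) (i j : Fin n) (x : F) :
    Matrix.single i j x ∈ elemComp F v ((v i)⁻¹ * v j) := by
  refine mem_elemComp.2 fun k l hne => ?_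
  apply Matrix.single_apply_of_ne
  rintro ⟨rfl, rfl⟩
  exact hne rfl

open scoped Classical in
noncomputable def eSub [NeZero n] (v : Fin n → G) : ℕ × G → Matrix (Fin n) (Fin n) F :=
  fun q => if h : ∃ s : Fin n, (((s : ℕ), (v s)⁻¹ * v (s+1)) : ℕ × G) = q
    then Matrix.single h.choose (h.choose + 1) 1 else 0

open scoped Classical in
lemma eSub_graded [NeZero n] (v : Fin n → G) :
    GradedSubst (elemComp F v) (eSub v : ℕ × G → Matrix (Fin n) (Fin n) F) := by
  intro q
  rw [eSub]
  split_ifs with h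
  · have hs := h.choose_spec
    have hq2 : (v h.choose)⁻¹ * v (h.choose + 1) = q.2 := congrArg Prod.snd hs
    rw [← hq2]
    exact stdBasis_mem v _ _ _
  · exact (elemComp F v q.2).zero_mem

open scoped Classical in
lemma eSub_apply [NeZero n] (v : Fin n → G) (s : Fin n) :
    (eSub v : ℕ × G → Matrix (Fin n) (Fin n) F) (((s : ℕ), (v s)⁻¹ * v (s+1)) : ℕ × G)
      = Matrix.single s (s+1) 1 := by
  have h : ∃ s' : Fin n, (((s' : ℕ), (v s')⁻¹ * v (s'+1)) : ℕ × G)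
      = (((s : ℕ), (v s)⁻¹ * v (s+1)) : ℕ × G) := ⟨s, rfl⟩
  rw [eSub, dif_pos h]
  have hs : h.choose = s := Fin.val_injective (congrArg Prod.fst h.choose_spec)
  rw [hs]

lemma eCoeff [NeZero n] (v : Fin n → G) (hv : Function.Injective v)
    (lam : ↥(GradedPerms v) →* Fˣ) :
    (∑ σ : ↥(GradedPerms v), (((lam σ)⁻¹ : Fˣ) : F) *
      ∏ s : Fin n, (Matrix.single s (s+1) (1:F))
        ((σ : Equiv.Perm (Fin n)) s) ((σ : Equiv.Perm (Fin n)) (s+1))) = 1 := by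
  rw [Fintype.sum_eq_single (1 : ↥(GradedPerms v))]
  · have hprod : ∀ s : Fin n, (Matrix.single s (s+1) (1:F))
        (((1 : ↥(GradedPerms v)) : Equiv.Perm (Fin n)) s)
        (((1 : ↥(GradedPerms v)) : Equiv.Perm (Fin n)) (s+1)) = 1 := by
      intro s
      simp [Matrix.single_apply_same]
    rw [Finset.prod_congr rfl fun s _ => hprod s]
    simp
  · intro σ hσ
    have hex : ∃ s : Fin n, (σ : Equiv.Perm (Fin n)) s ≠ s := by
      by_contra hall
      push_neg at hall
      exact hσ (Subtype.ext (Equiv.ext fun s => hall s))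
    obtain ⟨s, hs⟩ := hex
    rw [Finset.prod_eq_zero (Finset.mem_univ s), mul_zero]
    apply Matrix.single_apply_of_ne
    rintro ⟨h1, -⟩
    exact hs h1.symm

end Aux

/-- Let `A = Mₙ(F)` carry the elementary grading induced by an
`n`-tuple `v` of pairwise distinct elements of `G` and let `i₁, …, i_d` be a system of
representatives of the orbits of `H = GradedPerms v`.
(1) If `P` is a non-zero diagonal matrix and `f` a non-identity all of whose admissible
values are scalar multiples of `P`, then there is a homomorphism `λ : H → Fˣ` such that
`P` is a linear combination of the matrices `P(i₁), …, P(i_d)`.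
(2) Conversely, for a homomorphism `λ : H → Fˣ` and a non-zero diagonal matrix
`P = diag p` which is a linear combination of `P(i₁), …, P(i_d)`, the polynomial
`cyclicPoly v p` is not a graded identity and all of its admissible values are scalar
multiples of `P`. -/
theorem diagonal_scalar_valued_polynomials
    (F : Type*) [Field F] [Infinite F] (hchar : (2 : F) ≠ 0)
    {G : Type*} [Group G] {n : ℕ} [NeZero n] (v : Fin n → G)
    (hv : Function.Injective v)
    (d : ℕ) (reps : Fin d → Fin n)
    (hreps : ∀ m : Fin n, ∃! t : Fin d,
      ∃ σ : ↥(GradedPerms v), (σ : Equiv.Perm (Fin n)) (reps t) = m) :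
    (∀ (P : Matrix (Fin n) (Fin n) F) (f : FreeAlgebra F (ℕ × G)),
        P ≠ 0 → (∀ k l, k ≠ l → P k l = 0) →
        ¬ IsGradedIdentity (elemComp F v) f →
        (∀ a : ℕ × G → Matrix (Fin n) (Fin n) F, GradedSubst (elemComp F v) a →
          ∃ c : F, FreeAlgebra.lift F a f = c • P) →
        ∃ lam : ↥(GradedPerms v) →* Fˣ, ∃ c : Fin d → F,
          P = ∑ t : Fin d, c t • Pmat F v lam (reps t))
    ∧ (∀ (lam : ↥(GradedPerms v) →* Fˣ) (p : Fin n → F),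
        Matrix.diagonal p ≠ 0 →
        (∃ c : Fin d → F, Matrix.diagonal p = ∑ t : Fin d, c t • Pmat F v lam (reps t)) →
        ¬ IsGradedIdentity (elemComp F v) (cyclicPoly F v p) ∧
          ∀ a : ℕ × G → Matrix (Fin n) (Fin n) F, GradedSubst (elemComp F v) a →
            ∃ c : F, FreeAlgebra.lift F a (cyclicPoly F v p) = c • Matrix.diagonal p) := by
  constructor
  · -- Part 1
    intro P f hP0 hPdiag hnid hval
    rw [IsGradedIdentity] at hnid
    push_neg at hnid
    obtain ⟨a, ha, hane⟩ := hnid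
    obtain ⟨c₀, hc₀⟩ := hval a ha
    have hc₀ne : c₀ ≠ 0 := by
      rintro rfl
      rw [zero_smul] at hc₀
      exact hane hc₀
    have hgsub : ∀ σ : ↥(GradedPerms v), GradedSubst (elemComp F v)
        (fun q => (Matrix.reindexAlgEquiv F F ((σ : Equiv.Perm (Fin n)))) (a q)) := by
      intro σ q
      refine mem_elemComp.2 fun i j hne => ?_
      simp only [Matrix.reindexAlgEquiv_apply, Matrix.reindex_apply, Matrix.submatrix_apply]
      refine mem_elemComp.1 (ha q) _ _ ?_
      have hinv := (GradedPerms v).inv_mem σ.2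
      have hrel := mem_gradedPerms.1 hinv i j
      have hsymm : ⇑((σ : Equiv.Perm (Fin n)).symm) = ⇑((σ : Equiv.Perm (Fin n))⁻¹) := rfl
      rw [hsymm, hrel]
      exact hne
    have hlift : ∀ (σ : ↥(GradedPerms v)) (x : FreeAlgebra F (ℕ × G)),
        FreeAlgebra.lift F
            (fun q => (Matrix.reindexAlgEquiv F F ((σ : Equiv.Perm (Fin n)))) (a q)) x
          = (Matrix.reindexAlgEquiv F F ((σ : Equiv.Perm (Fin n))))
              (FreeAlgebra.lift F a x) := by
      intro σ x
      have hcomp : FreeAlgebra.lift F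
          (fun q => (Matrix.reindexAlgEquiv F F ((σ : Equiv.Perm (Fin n)))) (a q))
          = ((Matrix.reindexAlgEquiv F F ((σ : Equiv.Perm (Fin n)))).toAlgHom.comp
              (FreeAlgebra.lift F a)) := by
        refine FreeAlgebra.hom_ext ?_
        funext q
        simp [FreeAlgebra.lift_ι_apply]
      rw [hcomp]
      rfl
    have hex : ∀ σ : ↥(GradedPerms v), ∃ m : F,
        (Matrix.reindexAlgEquiv F F ((σ : Equiv.Perm (Fin n)))) P = m • P := by
      intro σ
      obtain ⟨cσ, hcσ⟩ := hval _ (hgsub σ)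
      rw [hlift σ f, hc₀, map_smul] at hcσ
      refine ⟨c₀⁻¹ * cσ, ?_⟩
      have h2 := congrArg (fun M : Matrix (Fin n) (Fin n) F => c₀⁻¹ • M) hcσ
      simpa [smul_smul, inv_mul_cancel₀ hc₀ne] using h2
    choose μ hμ using hex
    have huniq : ∀ {m m' : F}, m • P = m' • P → m = m' := by
      intro m m' h
      by_contra hne
      have hz : (m - m') • P = 0 := by rw [sub_smul, h, sub_self]
      rcases smul_eq_zero.1 hz with h1 | h1
      · exact hne (sub_eq_zero.1 h1)
      · exact hP0 h1
    have hμone : μ 1 = 1 := by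
      apply huniq
      rw [← hμ 1, one_smul]
      have h1 : ((1 : ↥(GradedPerms v)) : Equiv.Perm (Fin n)) = Equiv.refl (Fin n) := rfl
      rw [h1, Matrix.reindexAlgEquiv_refl]
      rfl
    have hμmul : ∀ σ τ : ↥(GradedPerms v), μ (σ * τ) = μ σ * μ τ := by
      intro σ τ
      apply huniq
      rw [← hμ (σ * τ)]
      have hcoe : ((σ * τ : ↥(GradedPerms v)) : Equiv.Perm (Fin n))
          = (σ : Equiv.Perm (Fin n)) * (τ : Equiv.Perm (Fin n)) := rfl
      have hfun : ⇑(((σ : Equiv.Perm (Fin n)) * (τ : Equiv.Perm (Fin n))).symm)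
          = ⇑((τ : Equiv.Perm (Fin n)).symm) ∘ ⇑((σ : Equiv.Perm (Fin n)).symm) := rfl
      have hcomp : (Matrix.reindexAlgEquiv F F
            ((σ : Equiv.Perm (Fin n)) * (τ : Equiv.Perm (Fin n)))) P
          = (Matrix.reindexAlgEquiv F F (σ : Equiv.Perm (Fin n)))
              ((Matrix.reindexAlgEquiv F F (τ : Equiv.Perm (Fin n))) P) := by
        simp only [Matrix.reindexAlgEquiv_apply, Matrix.reindex_apply,
          Matrix.submatrix_submatrix]
        rw [hfun]
      rw [hcoe, hcomp, hμ τ, map_smul, hμ σ, smul_smul, mul_comm (μ τ) (μ σ)]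
    have hμne : ∀ σ : ↥(GradedPerms v), μ σ ≠ 0 := by
      intro σ h
      apply hP0
      have h1 := hμ σ
      rw [h, zero_smul] at h1
      have h2 := congrArg ((Matrix.reindexAlgEquiv F F ((σ : Equiv.Perm (Fin n)))).symm) h1
      simpa using h2
    set lam0 : ↥(GradedPerms v) →* Fˣ := MonoidHom.mk'
      (fun σ => (Units.mk0 (μ σ) (hμne σ))⁻¹)
      (by
        intro σ τ
        have h1 : Units.mk0 (μ (σ * τ)) (hμne (σ * τ))
            = Units.mk0 (μ σ) (hμne σ) * Units.mk0 (μ τ) (hμne τ) :=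
          Units.ext (by simp [hμmul])
        show (Units.mk0 (μ (σ * τ)) (hμne _))⁻¹
            = (Units.mk0 (μ σ) (hμne σ))⁻¹ * (Units.mk0 (μ τ) (hμne τ))⁻¹
        rw [h1, mul_inv]) with hlam0
    have hlamval : ∀ σ : ↥(GradedPerms v), ((lam0 σ : Fˣ) : F) = (μ σ)⁻¹ := by
      intro σ
      rw [hlam0]
      rfl
    have hkey : ∀ (σ : ↥(GradedPerms v)) (j : Fin n),
        P ((σ : Equiv.Perm (Fin n)) j) ((σ : Equiv.Perm (Fin n)) j)
          = ((lam0 σ : Fˣ) : F) * P j j := by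
      intro σ j
      have h := congrArg (fun M : Matrix (Fin n) (Fin n) F =>
        M ((σ : Equiv.Perm (Fin n)) j) ((σ : Equiv.Perm (Fin n)) j)) (hμ σ)
      simp only [Matrix.reindexAlgEquiv_apply, Matrix.reindex_apply, Matrix.submatrix_apply,
        Matrix.smul_apply, smul_eq_mul, Equiv.symm_apply_apply] at h
      rw [hlamval σ, h, inv_mul_cancel_left₀ (hμne σ)]
    refine ⟨lam0, fun t => P (reps t) (reps t), ?_⟩
    ext k l
    rcases eq_or_ne k l with rfl | hkl
    · symm
      rw [Matrix.sum_apply]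
      obtain ⟨t₀, ⟨σ, hσk⟩, huniqt⟩ := hreps k
      rw [Finset.sum_eq_single t₀]
      · rw [Matrix.smul_apply, smul_eq_mul, Pmat_apply_diag]
        rw [Fintype.sum_eq_single σ]
        · rw [if_pos hσk, ← hσk, hkey σ (reps t₀)]
          ring
        · intro α hα
          rw [if_neg]
          intro hcon
          apply hα
          have h1 : ((σ⁻¹ * α : ↥(GradedPerms v)) : Equiv.Perm (Fin n)) (reps t₀)
              = reps t₀ := by
            have : ((σ⁻¹ * α : ↥(GradedPerms v)) : Equiv.Perm (Fin n)) (reps t₀)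
                = ((σ : Equiv.Perm (Fin n)))⁻¹ ((α : Equiv.Perm (Fin n)) (reps t₀)) := rfl
            rw [this, hcon, ← hσk, Equiv.Perm.inv_def, Equiv.symm_apply_apply]
          have h2 := gp_free hv (σ⁻¹ * α).2 h1
          have h3 : (σ⁻¹ * α : ↥(GradedPerms v)) = 1 := Subtype.ext h2
          exact (inv_mul_eq_one.1 h3).symm
      · intro t _ ht
        rw [Matrix.smul_apply, smul_eq_mul, Pmat_apply_diag]
        have hz : ∀ α : ↥(GradedPerms v),
            (if (α : Equiv.Perm (Fin n)) (reps t) = k then ((lam0 α : Fˣ) : F) else 0)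
              = 0 := by
          intro α
          rw [if_neg]
          intro hcon
          exact ht (huniqt t ⟨α, hcon⟩)
        rw [Finset.sum_congr rfl fun α _ => hz α, Finset.sum_const_zero, mul_zero]
      · intro h
        exact absurd (Finset.mem_univ _) h
    · rw [hPdiag k l hkl, Matrix.sum_apply]
      symm
      refine Finset.sum_eq_zero fun t _ => ?_
      rw [Matrix.smul_apply, Pmat_apply_off v lam0 _ hkl, smul_zero]
  · -- Part 2
    rintro lam p hP0 ⟨c, hc⟩
    have hp : ∀ (σ : ↥(GradedPerms v)) (j : Fin n),
        p ((σ : Equiv.Perm (Fin n)) j) = ((lam σ : Fˣ) : F) * p j :=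
      fun σ j => hp_of_combo v reps lam p c hc σ j
    constructor
    · intro hid
      have hvalE := hid _ (eSub_graded v)
      rw [lift_cyclicPoly] at hvalE
      have hb : ∀ i : Fin n, (List.ofFn fun t : Fin n =>
          (eSub v : ℕ × G → Matrix (Fin n) (Fin n) F)
            (((i + t : Fin n) : ℕ), (v (i + t))⁻¹ * v (i + t + 1)))
          = List.ofFn fun t : Fin n =>
              (fun s : Fin n => Matrix.single s (s+1) (1:F)) (i + t) := by
        intro i
        congr 1
        funext t
        exact eSub_apply v (i + t)
      rw [Finset.sum_congr rfl fun i _ => by rw [hb i]] at hvalE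
      rw [cyclic_value_eq v hv p lam hp _ (fun s => stdBasis_mem v s (s+1) 1)] at hvalE
      rw [eCoeff v hv lam, one_smul] at hvalE
      exact hP0 hvalE
    · intro a ha
      rw [lift_cyclicPoly]
      refine ⟨_, cyclic_value_eq v hv p lam hp
        (fun s : Fin n => a (((s : ℕ), (v s)⁻¹ * v (s+1)) : ℕ × G))
        (fun s => ha (((s : ℕ), (v s)⁻¹ * v (s+1)) : ℕ × G))⟩
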